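/- Fix γ ∈ (0,1) and μ > 0, and let g : ℝ → ℝ ∪ {−∞} be any function. Define F(ξ) = sup_{x∈ℝ} Φ_ξ[g](x). Then F(ξ) = 1 − γ + sup_{y∈ℝ} ( g(y) − min(μ,1)·max(ξ − y, 0) ) for every ξ ∈ ℝ, and consequently the function ξ ↦ F(ξ) is non-increasing. -/

import Mathlib

/-- `Φ_ξ[g](x) = 1 − γ + sup_y ( g(y) − |x − y| ) − μ·max(ξ − x, 0)`. -/
noncomputable def Phi (γ μ : ℝ) (g : ℝ → EReal) (ξ x : ℝ) : EReal :=
  ((1 - γ : ℝ) : EReal) + (⨆ y : ℝ, g y - ((|x - y| : ℝ) : EReal))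
    - ((μ * max (ξ - x) 0 : ℝ) : EReal)

noncomputable def addRealIso (r : ℝ) : EReal ≃o EReal where
  toFun x := x + (r : EReal)
  invFun x := x - (r : EReal)
  left_inv _ := EReal.add_sub_cancel_right
  right_inv _ := EReal.sub_add_cancel
  map_rel_iff' := (EReal.addLECancellable_coe r).add_le_add_iff_right

lemma iSup_add_coe {ι : Sort*} (f : ι → EReal) (r : ℝ) :
    (⨆ i, f i) + (r : EReal) = ⨆ i, (f i + (r : EReal)) :=
  (addRealIso r).map_iSup f

lemma add_coe_coe (a : EReal) (r s : ℝ) :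
    a + (r : EReal) + (s : EReal) = a + ((r + s : ℝ) : EReal) := by
  induction a using EReal.rec <;> simp [← EReal.coe_add, add_assoc]

lemma cost_lb (μ : ℝ) (hμ : 0 < μ) (ξ x y : ℝ) :
    min μ 1 * max (ξ - y) 0 ≤ |x - y| + μ * max (ξ - x) 0 := by
  have h1 : min μ 1 ≤ 1 := min_le_right _ _
  have h2 : min μ 1 ≤ μ := min_le_left _ _
  have h3 : 0 < min μ 1 := lt_min hμ one_pos
  rcases le_total y ξ with hy | hy
  · rw [max_eq_left (by linarith)]
    rcases le_total x ξ with hx | hx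
    · rw [max_eq_left (by linarith)]
      rcases abs_cases (x - y) with ⟨h, _⟩ | ⟨h, _⟩ <;> nlinarith
    · rw [max_eq_right (by linarith)]
      rcases abs_cases (x - y) with ⟨h, _⟩ | ⟨h, _⟩ <;> nlinarith
  · rw [max_eq_right (by linarith)]
    rw [mul_zero]; positivity

lemma cost_attained (μ : ℝ) (ξ y : ℝ) :
    ∃ x : ℝ, |x - y| + μ * max (ξ - x) 0 = min μ 1 * max (ξ - y) 0 := by
  rcases le_total μ 1 with h | h
  · exact ⟨y, by rw [min_eq_left h]; simp⟩
  · rcases le_total y ξ with hy | hy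
    · refine ⟨ξ, ?_⟩
      rw [min_eq_right h, max_eq_left (by linarith), abs_of_nonneg (by linarith)]
      simp [hy]
    · exact ⟨y, by rw [max_eq_right (by linarith)]; simp⟩

lemma Phi_eq (γ μ : ℝ) (g : ℝ → EReal) (ξ x : ℝ) :
    Phi γ μ g ξ x
      = ⨆ y : ℝ, g y + ((1 - γ - (|x - y| + μ * max (ξ - x) 0) : ℝ) : EReal) := by
  unfold Phi
  rw [sub_eq_add_neg, ← EReal.coe_neg, add_comm (((1 - γ : ℝ)) : EReal),
    iSup_add_coe, iSup_add_coe]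
  refine iSup_congr fun y => ?_
  rw [sub_eq_add_neg (g y), ← EReal.coe_neg, add_coe_coe, add_coe_coe]
  norm_cast
  ring_nf

lemma inner_sup (a : EReal) (c e : ℝ) (f : ℝ → ℝ) (hlb : ∀ x, e ≤ f x)
    (hatt : ∃ x, f x = e) :
    (⨆ x : ℝ, a + ((c - f x : ℝ) : EReal)) = a + ((c - e : ℝ) : EReal) := by
  apply le_antisymm
  · refine iSup_le fun x => add_le_add le_rfl ?_
    exact EReal.coe_le_coe_iff.mpr (by linarith [hlb x])
  · obtain ⟨x₀, hx₀⟩ := hatt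
    have := le_iSup (fun x : ℝ => a + ((c - f x : ℝ) : EReal)) x₀
    rwa [hx₀] at this

/-- `F(ξ) = sup_x Φ_ξ[g](x)` satisfies
`F(ξ) = 1 − γ + sup_y ( g(y) − min(μ,1)·max(ξ − y, 0) )` and is non-increasing. -/
theorem F_formula_and_antitone (γ μ : ℝ) (hγ : γ ∈ Set.Ioo (0 : ℝ) 1) (hμ : 0 < μ)
    (g : ℝ → EReal) :
    (∀ ξ : ℝ, (⨆ x : ℝ, Phi γ μ g ξ x) =
        ((1 - γ : ℝ) : EReal) +
          ⨆ y : ℝ, g y - ((min μ 1 * max (ξ - y) 0 : ℝ) : EReal)) ∧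
    Antitone (fun ξ : ℝ => ⨆ x : ℝ, Phi γ μ g ξ x) := by
  have hform : ∀ ξ : ℝ, (⨆ x : ℝ, Phi γ μ g ξ x) =
      ((1 - γ : ℝ) : EReal) +
        ⨆ y : ℝ, g y - ((min μ 1 * max (ξ - y) 0 : ℝ) : EReal) := by
    intro ξ
    calc (⨆ x : ℝ, Phi γ μ g ξ x)
        = ⨆ x : ℝ, ⨆ y : ℝ,
            g y + ((1 - γ - (|x - y| + μ * max (ξ - x) 0) : ℝ) : EReal) := by
          exact iSup_congr fun x => Phi_eq γ μ g ξ x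
      _ = ⨆ y : ℝ, ⨆ x : ℝ,
            g y + ((1 - γ - (|x - y| + μ * max (ξ - x) 0) : ℝ) : EReal) := iSup_comm
      _ = ⨆ y : ℝ, g y + ((1 - γ - min μ 1 * max (ξ - y) 0 : ℝ) : EReal) := by
          refine iSup_congr fun y => ?_
          exact inner_sup (g y) (1 - γ) (min μ 1 * max (ξ - y) 0)
            (fun x => |x - y| + μ * max (ξ - x) 0)
            (fun x => cost_lb μ hμ ξ x y) (cost_attained μ ξ y)
      _ = ((1 - γ : ℝ) : EReal) +
            ⨆ y : ℝ, g y - ((min μ 1 * max (ξ - y) 0 : ℝ) : EReal) := by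
          rw [add_comm (((1 - γ : ℝ)) : EReal), iSup_add_coe]
          refine iSup_congr fun y => ?_
          rw [sub_eq_add_neg (g y), ← EReal.coe_neg, add_coe_coe]
          norm_cast
          ring_nf
  refine ⟨hform, fun ξ ξ' h => ?_⟩
  simp only [hform]
  refine add_le_add le_rfl (iSup_mono fun y => ?_)
  rw [sub_eq_add_neg (g y), sub_eq_add_neg (g y), ← EReal.coe_neg, ← EReal.coe_neg]
  refine add_le_add le_rfl (EReal.coe_le_coe_iff.mpr ?_)
  have : max (ξ - y) 0 ≤ max (ξ' - y) 0 := max_le_max (by linarith) le_rfl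
  nlinarith [lt_min hμ (one_pos (α := ℝ))]
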